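/- arXiv:1212.3236 — 5 statements merged into one kernel-verified Lean document; each statement's English description precedes it below -/
import Mathlib

section
/- Let X be a real Hilbert space and E, C : X → ℝ with E nonnegative and with both E and C satisfying the splitting property. Let u ∈ X with C(u) ≠ 0, and let (w_n) be a sequence converging weakly to 0 such that E(w_n) → e and C(w_n) → c for some real numbers e, c with c ≠ 0 and C(u) + c ≠ 0. Then the sequence Λ(u + w_n) = E(u + w_n)/|C(u + w_n)| converges, and its limit satisfies lim_n Λ(u + w_n) ≥ min( E(u)/|C(u)| , e/|c| ). -/
open Filter Topology

variable {X : Type*} [NormedAddCommGroup X] [InnerProductSpace ℝ X]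

/-- A sequence in a real inner product space converges weakly to `0`. -/
def WeakNullSeq (w : ℕ → X) : Prop :=
  ∀ v : X, Tendsto (fun n => (inner ℝ v (w n) : ℝ)) atTop (𝓝 0)

/-- A functional `F : X → ℝ` has the splitting property. -/
def SplittingProperty (F : X → ℝ) : Prop :=
  ∀ (u : X) (w : ℕ → X), WeakNullSeq w →
    Tendsto (fun n => F (u + w n) - F u - F (w n)) atTop (𝓝 0)

/-- The hylenic ratio `Λ(u) = E(u)/|C(u)|`. -/
noncomputable def hylenicRatio (E C : X → ℝ) (u : X) : ℝ := E u / |C u|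

/-- If `E ≥ 0` and `E, C` satisfy the splitting property, `C u ≠ 0`, and
`w n ⇀ 0` weakly with `E (w n) → e`, `C (w n) → c`, `c ≠ 0`, `C u + c ≠ 0`,
then `Λ(u + w n)` converges and its limit is at least `min (Λ u) (e/|c|)`. -/
theorem stmt_2 [CompleteSpace X] (E C : X → ℝ) (hE : ∀ u : X, 0 ≤ E u)
    (hEs : SplittingProperty E) (hCs : SplittingProperty C)
    (u : X) (hCu : C u ≠ 0) (w : ℕ → X) (hw : WeakNullSeq w)
    (e c : ℝ)
    (he : Tendsto (fun n => E (w n)) atTop (𝓝 e))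
    (hc : Tendsto (fun n => C (w n)) atTop (𝓝 c))
    (hc0 : c ≠ 0) (hsum : C u + c ≠ 0) :
    ∃ l : ℝ, Tendsto (fun n => hylenicRatio E C (u + w n)) atTop (𝓝 l) ∧
      min (hylenicRatio E C u) (e / |c|) ≤ l := by

  have hEten : Tendsto (fun n => E (u + w n)) atTop (𝓝 (E u + e)) := by
    have h1 := (hEs u w hw).add he
    have : (fun n => E (u + w n) - E u - E (w n) + E (w n)) =
        fun n => E (u + w n) - E u := by funext n; ring
    rw [this] at h1
    simpa [add_comm] using h1.add_const (E u)
  have hCten : Tendsto (fun n => C (u + w n)) atTop (𝓝 (C u + c)) := by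
    have h1 := (hCs u w hw).add hc
    have : (fun n => C (u + w n) - C u - C (w n) + C (w n)) =
        fun n => C (u + w n) - C u := by funext n; ring
    rw [this] at h1
    simpa [add_comm] using h1.add_const (C u)
  refine ⟨(E u + e) / |C u + c|, ?_, ?_⟩
  · have habs : Tendsto (fun n => |C (u + w n)|) atTop (𝓝 |C u + c|) :=
      hCten.abs
    exact hEten.div habs (abs_ne_zero.mpr hsum)
  · have he0 : 0 ≤ e := ge_of_tendsto' he fun n => hE (w n)
    set m := min (hylenicRatio E C u) (e / |c|) with hm
    have hCua : 0 < |C u| := abs_pos.mpr hCu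
    have hca : 0 < |c| := abs_pos.mpr hc0
    have hm0 : 0 ≤ m := le_min (div_nonneg (hE u) hCua.le) (div_nonneg he0 hca.le)
    have h1 : m * |C u| ≤ E u := by
      have := min_le_left (hylenicRatio E C u) (e / |c|)
      rw [hylenicRatio] at this
      calc m * |C u| ≤ (E u / |C u|) * |C u| := by
            exact mul_le_mul_of_nonneg_right this hCua.le
        _ = E u := div_mul_cancel₀ _ hCua.ne'
    have h2 : m * |c| ≤ e := by
      have := min_le_right (hylenicRatio E C u) (e / |c|)
      calc m * |c| ≤ (e / |c|) * |c| := mul_le_mul_of_nonneg_right this hca.le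
        _ = e := div_mul_cancel₀ _ hca.ne'
    have h3 : m * |C u + c| ≤ E u + e := by
      calc m * |C u + c| ≤ m * (|C u| + |c|) :=
            mul_le_mul_of_nonneg_left (abs_add_le _ _) hm0
        _ = m * |C u| + m * |c| := by ring
        _ ≤ E u + e := add_le_add h1 h2
    rw [le_div_iff₀ (abs_pos.mpr hsum)]
    exact h3
end

section
/- Let X be a real Hilbert space and G a group of linear isometric bijections of X. Let E, C : X → ℝ be continuous, G-invariant functionals with E(0) = C(0) = 0, both satisfying the splitting property, and with E coercive: E(u) > 0 for every u ≠ 0, E(u_n) → ∞ whenever ‖u_n‖ → ∞, and ‖u_n‖ → 0 whenever E(u_n) → 0. Assume the hylomorphy condition inf{Λ(u) : u ∈ X, C(u) ≠ 0} < Λ₀. Then for every δ ∈ (0, δ_∞): every minimizing sequence of J_δ (over {u : C(u) ≠ 0}) is G-compact, and J_δ attains its infimum at some u_δ with u_δ ≠ 0 and C(u_δ) ≠ 0. -/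
open Filter Topology

variable {X : Type*} [NormedAddCommGroup X] [InnerProductSpace ℝ X]

/-- A sequence `(u n)` is `G`-vanishing: it is norm-bounded and for every
subsequence `(u (φ k))` and every sequence `(g k)` in `G`, `g k (u (φ k))`
converges weakly to `0`. -/
def GVanishing (G : Subgroup (X ≃ₗᵢ[ℝ] X)) (u : ℕ → X) : Prop :=
  (∃ M : ℝ, ∀ n, ‖u n‖ ≤ M) ∧
  ∀ φ : ℕ → ℕ, StrictMono φ → ∀ g : ℕ → G,
    WeakNullSeq (fun k => (g k : X ≃ₗᵢ[ℝ] X) (u (φ k)))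

/-- `Λ₀`: the infimum of `liminf Λ(u n)` over all `G`-vanishing sequences
with `C (u n) ≠ 0` for all `n`. -/
noncomputable def Lambda0 (G : Subgroup (X ≃ₗᵢ[ℝ] X)) (E C : X → ℝ) : ℝ :=
  sInf {l : ℝ | ∃ u : ℕ → X, GVanishing G u ∧ (∀ n, C (u n) ≠ 0) ∧
    l = liminf (fun n => hylenicRatio E C (u n)) atTop}

/-- `J_δ(u) = Λ(u) + δ E(u)`. -/
noncomputable def Jfun (E C : X → ℝ) (δ : ℝ) (u : X) : ℝ :=
  hylenicRatio E C u + δ * E u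

/-- A sequence is `G`-compact: some subsequence, translated by elements of `G`,
is norm-convergent. -/
def GCompactSeq (G : Subgroup (X ≃ₗᵢ[ℝ] X)) (u : ℕ → X) : Prop :=
  ∃ φ : ℕ → ℕ, StrictMono φ ∧ ∃ g : ℕ → G, ∃ L : X,
    Tendsto (fun k => (g k : X ≃ₗᵢ[ℝ] X) (u (φ k))) atTop (𝓝 L)

/-- `δ` lies in the interval `(0, δ_∞)`, where
`δ_∞ = sup {δ > 0 | ∃ v, C v ≠ 0 ∧ J_δ(v) < Λ₀}`; equivalently (since `E ≥ 0`
makes the set below an interval) there is `δ' > δ` in that set. -/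
def MemDeltaInterval (G : Subgroup (X ≃ₗᵢ[ℝ] X)) (E C : X → ℝ) (δ : ℝ) : Prop :=
  0 < δ ∧ ∃ δ' : ℝ, δ < δ' ∧ ∃ v : X, C v ≠ 0 ∧ Jfun E C δ' v < Lambda0 G E C

/-- The hylomorphy condition `inf {Λ(u) | C u ≠ 0} < Λ₀`. -/
def HylomorphyCondition (G : Subgroup (X ≃ₗᵢ[ℝ] X)) (E C : X → ℝ) : Prop :=
  sInf {r : ℝ | ∃ u : X, C u ≠ 0 ∧ r = hylenicRatio E C u} < Lambda0 G E C

-- liminf of a nonnegative real sequence is nonnegative (junk-value safe)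
theorem liminf_nonneg' (f : ℕ → ℝ) (hf : ∀ n, 0 ≤ f n) : 0 ≤ liminf f atTop := by
  rw [liminf_eq]
  by_cases h : BddAbove {a : ℝ | ∀ᶠ n in atTop, a ≤ f n}
  · exact le_csSup h (Eventually.of_forall hf)
  · rw [Real.sSup_of_not_bddAbove h]

theorem freq_of_not_tendsto_zero (c : ℕ → ℝ) (h : ¬ Tendsto c atTop (𝓝 0)) :
    ∃ ε : ℝ, 0 < ε ∧ ∃ᶠ n in atTop, ε ≤ |c n| := by
  by_contra hcon
  push_neg at hcon
  apply h
  rw [NormedAddCommGroup.tendsto_nhds_zero]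
  intro ε hε
  have := hcon ε hε
  filter_upwards [this] with n hn
  rw [Real.norm_eq_abs]
  exact hn

theorem bw_real (f : ℕ → ℝ) (B : ℝ) (hf : ∀ n, |f n| ≤ B) :
    ∃ φ : ℕ → ℕ, StrictMono φ ∧ ∃ l : ℝ, Tendsto (fun k => f (φ k)) atTop (𝓝 l) := by
  have hmem : ∀ n, f n ∈ Set.Icc (-B) B := fun n => abs_le.mp (hf n)
  obtain ⟨l, _, φ, hφ, hl⟩ := isCompact_Icc.tendsto_subseq hmem
  exact ⟨φ, hφ, l, hl⟩

theorem bw_real_ev (f : ℕ → ℝ) (B : ℝ) (hf : ∀ᶠ n in atTop, |f n| ≤ B) :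
    ∃ φ : ℕ → ℕ, StrictMono φ ∧ ∃ l : ℝ, Tendsto (fun k => f (φ k)) atTop (𝓝 l) := by
  obtain ⟨N, hN⟩ := eventually_atTop.mp hf
  obtain ⟨ρ, hρ, l, hl⟩ := bw_real (fun j => f (j + N)) B (fun j => hN _ (Nat.le_add_left N j))
  refine ⟨fun j => ρ j + N, fun a b hab => by simpa using hρ hab, l, hl⟩

theorem bdd_of_eventually (f : ℕ → ℝ) (B : ℝ) (h : ∀ᶠ n in atTop, f n ≤ B) :
    ∃ M : ℝ, ∀ n, f n ≤ M := by
  obtain ⟨N, hN⟩ := eventually_atTop.mp h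
  have hne : ((Finset.range (N + 1)).image f).Nonempty := by simp
  refine ⟨max B (((Finset.range (N + 1)).image f).max' hne), fun n => ?_⟩
  rcases le_or_gt N n with hn | hn
  · exact le_max_of_le_left (hN n hn)
  · refine le_max_of_le_right (Finset.le_max' _ _ ?_)
    exact Finset.mem_image_of_mem f (Finset.mem_range.mpr (by omega))

theorem mediant_le (a b c d : ℝ) (ha : 0 ≤ a) (hb : 0 ≤ b) (hc : 0 < c) (hd : 0 < d) :
    min (a / c) (b / d) ≤ (a + b) / (c + d) := by
  rcases le_total (a / c) (b / d) with h | h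
  · rw [min_eq_left h]
    rw [div_le_div_iff₀ hc hd] at h
    rw [div_le_div_iff₀ hc (by linarith)]
    nlinarith
  · rw [min_eq_right h]
    rw [div_le_div_iff₀ hd hc] at h
    rw [div_le_div_iff₀ hd (by linarith)]
    nlinarith

theorem no_vanishing_denom (e c : ℕ → ℝ) (A K : ℝ) (hA : 0 < A) (hK : 0 ≤ K)
    (he : Tendsto e atTop (𝓝 A)) (hc : Tendsto c atTop (𝓝 0)) (hc0 : ∀ j, c j ≠ 0)
    (hJ : ∀ᶠ j in atTop, e j / |c j| ≤ K) : False := by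
  have h1 : ∀ᶠ j in atTop, A / 2 ≤ e j := he.eventually (eventually_ge_nhds (by linarith))
  have h2 : ∀ᶠ j in atTop, |c j| < A / (2 * (K + 1)) := by
    have : Tendsto (fun j => |c j|) atTop (𝓝 0) := by simpa using hc.abs
    exact this.eventually (eventually_lt_nhds (by positivity))
  obtain ⟨j, hj1, hj2, hj3⟩ := (h1.and (h2.and hJ)).exists
  have hcj : 0 < |c j| := abs_pos.mpr (hc0 j)
  rw [div_le_iff₀ hcj] at hj3
  rw [lt_div_iff₀ (by positivity)] at hj2
  nlinarith [hj1, hj2, hj3, hcj]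



theorem weak_seq_compact [CompleteSpace X] (u : ℕ → X) (M : ℝ) (hu : ∀ n, ‖u n‖ ≤ M) :
    ∃ ψ : ℕ → ℕ, StrictMono ψ ∧ ∃ L : X,
      ∀ v : X, Tendsto (fun k => (inner ℝ v (u (ψ k)) : ℝ)) atTop (𝓝 (inner ℝ v L)) := by
  have hM0 : 0 ≤ M := le_trans (norm_nonneg _) (hu 0)
  set Y : Submodule ℝ X := (Submodule.span ℝ (Set.range u)).topologicalClosure with hY
  have huY : ∀ n, u n ∈ Y := fun n =>
    (Submodule.le_topologicalClosure _) (Submodule.subset_span (Set.mem_range_self n))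
  have hsep : TopologicalSpace.IsSeparable (Y : Set X) := by
    have := ((Set.countable_range u).isSeparable.span (R := ℝ)).closure
    simpa [hY, Submodule.topologicalClosure_coe] using this
  obtain ⟨c, hcc, hcsub⟩ := hsep
  have hc'c : (insert (0:X) c).Countable := hcc.insert 0
  obtain ⟨d, hd⟩ := hc'c.exists_eq_range ⟨0, Set.mem_insert 0 c⟩
  have hdense : (Y : Set X) ⊆ closure (Set.range d) := by
    rw [← hd]
    exact hcsub.trans (closure_mono (Set.subset_insert _ _))
  -- compactness in the product space
  set T : ℕ → ℕ → ℝ := fun k i => inner ℝ (d i) (u k) with hT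
  have hTmem : ∀ k, T k ∈ Set.univ.pi (fun i => Set.Icc (-(‖d i‖ * M)) (‖d i‖ * M)) := by
    intro k i _
    have h1 : |(inner ℝ (d i) (u k) : ℝ)| ≤ ‖d i‖ * ‖u k‖ := abs_real_inner_le_norm _ _
    have h2 : ‖d i‖ * ‖u k‖ ≤ ‖d i‖ * M := by
      exact mul_le_mul_of_nonneg_left (hu k) (norm_nonneg _)
    constructor <;> [linarith [abs_le.mp (h1.trans h2)]; linarith [(abs_le.mp (h1.trans h2)).2]]
  have hcomp : IsCompact (Set.univ.pi (fun i : ℕ => Set.Icc (-(‖d i‖ * M)) (‖d i‖ * M))) :=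
    isCompact_univ_pi (fun i => isCompact_Icc)
  obtain ⟨f, _, ψ, hψ, hTf⟩ := hcomp.tendsto_subseq hTmem
  have hcoord : ∀ i, Tendsto (fun k => T (ψ k) i) atTop (𝓝 (f i)) := by
    intro i
    exact (continuous_apply i).continuousAt.tendsto.comp hTf
  -- Cauchy for each v
  haveI : CompleteSpace Y := (Submodule.isClosed_topologicalClosure _).completeSpace_coe
  have hCY : ∀ x : X, x ∈ closure (Set.range d) → CauchySeq (fun k => (inner ℝ x (u (ψ k)) : ℝ)) := by
    intro x hx
    rw [Metric.cauchySeq_iff]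
    intro ε hε
    obtain ⟨b, hb, hdb⟩ := Metric.mem_closure_iff.mp hx (ε / (4 * (M + 1))) (by positivity)
    obtain ⟨i, rfl⟩ := hb
    have hcau := (hcoord i).cauchySeq
    rw [Metric.cauchySeq_iff] at hcau
    obtain ⟨N, hN⟩ := hcau (ε / 2) (by positivity)
    refine ⟨N, fun p hp q hq => ?_⟩
    have key : ∀ k, |(inner ℝ x (u (ψ k)) : ℝ) - inner ℝ (d i) (u (ψ k))| ≤ ε / (4 * (M + 1)) * M := by
      intro k
      have : (inner ℝ x (u (ψ k)) : ℝ) - inner ℝ (d i) (u (ψ k)) = inner ℝ (x - d i) (u (ψ k)) := by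
        rw [inner_sub_left]
      rw [this]
      calc |(inner ℝ (x - d i) (u (ψ k)) : ℝ)| ≤ ‖x - d i‖ * ‖u (ψ k)‖ := abs_real_inner_le_norm _ _
        _ ≤ ε / (4 * (M + 1)) * M := by
            apply mul_le_mul (le_of_lt ?_) (hu _) (norm_nonneg _) (by positivity)
            rw [← dist_eq_norm]; exact hdb
    have h1 := key p
    have h2 := key q
    have h3 := hN p hp q hq
    rw [Real.dist_eq] at h3 ⊢
    have hMM : ε / (4 * (M + 1)) * M < ε / 4 := by
      rw [div_mul_eq_mul_div, div_lt_div_iff₀ (by positivity) (by norm_num)]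
      nlinarith
    have h2' : |(inner ℝ (d i) (u (ψ q)) : ℝ) - inner ℝ x (u (ψ q))| ≤ ε / (4 * (M + 1)) * M := by
      rw [abs_sub_comm]; exact h2
    set A := (inner ℝ x (u (ψ p)) : ℝ) - inner ℝ (d i) (u (ψ p)) with hA
    set B := T (ψ p) i - T (ψ q) i with hB
    set D := (inner ℝ (d i) (u (ψ q)) : ℝ) - inner ℝ x (u (ψ q)) with hD
    have heq : (inner ℝ x (u (ψ p)) : ℝ) - inner ℝ x (u (ψ q)) = A + B + D := by
      simp only [hA, hB, hD, hT]; ring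
    rw [heq]
    have habs : |A + B + D| ≤ |A| + |B| + |D| :=
      (abs_add_le _ _).trans (add_le_add_left (abs_add_le _ _) _)
    have hBlt : |B| < ε / 2 := h3
    have hAlt : |A| < ε / 4 := lt_of_le_of_lt h1 hMM
    have hDlt : |D| < ε / 4 := lt_of_le_of_lt h2' hMM
    linarith
  have hCau : ∀ v : X, CauchySeq (fun k => (inner ℝ v (u (ψ k)) : ℝ)) := by
    intro v
    set P := Y.orthogonalProjectionOnto
    have hvP : ∀ k, (inner ℝ v (u (ψ k)) : ℝ) = inner ℝ ((P v : X)) (u (ψ k)) := by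
      intro k
      have horth : v - (P v : X) ∈ Yᗮ := Submodule.sub_starProjection_mem_orthogonal (K := Y) v
      have h0 : (inner ℝ (v - (P v : X)) (u (ψ k)) : ℝ) = 0 := by
        have := (Submodule.mem_orthogonal Y (v - (P v : X))).mp horth (u (ψ k)) (huY _)
        rwa [real_inner_comm] at this
      rw [inner_sub_left] at h0
      linarith
    have := hCY ((P v : X)) (hdense (P v).2)
    simpa only [← hvP] using this
  have hlim : ∀ v : X, ∃ l : ℝ, Tendsto (fun k => (inner ℝ v (u (ψ k)) : ℝ)) atTop (𝓝 l) :=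
    fun v => cauchySeq_tendsto_of_complete (hCau v)
  choose ℓ hℓ using hlim
  have hadd : ∀ x y : X, ℓ (x + y) = ℓ x + ℓ y := by
    intro x y
    refine tendsto_nhds_unique ?_ ((hℓ x).add (hℓ y))
    simpa only [inner_add_left] using hℓ (x + y)
  have hsmul : ∀ (r : ℝ) (x : X), ℓ (r • x) = r * ℓ x := by
    intro r x
    refine tendsto_nhds_unique ?_ ((hℓ x).const_mul r)
    simpa only [real_inner_smul_left] using hℓ (r • x)
  have hbound : ∀ v : X, ‖ℓ v‖ ≤ M * ‖v‖ := by
    intro v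
    have h1 : Tendsto (fun k => |(inner ℝ v (u (ψ k)) : ℝ)|) atTop (𝓝 |ℓ v|) := (hℓ v).abs
    refine le_of_tendsto h1 (Eventually.of_forall fun k => ?_)
    calc |(inner ℝ v (u (ψ k)) : ℝ)| ≤ ‖v‖ * ‖u (ψ k)‖ := abs_real_inner_le_norm _ _
      _ ≤ ‖v‖ * M := mul_le_mul_of_nonneg_left (hu _) (norm_nonneg _)
      _ = M * ‖v‖ := mul_comm _ _
  set flin : X →ₗ[ℝ] ℝ :=
    { toFun := ℓ, map_add' := hadd, map_smul' := hsmul }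
  set F : X →L[ℝ] ℝ := flin.mkContinuous M hbound
  set L : X := (InnerProductSpace.toDual ℝ X).symm F with hL
  refine ⟨ψ, hψ, L, fun v => ?_⟩
  have h1 : (inner ℝ L v : ℝ) = F v := InnerProductSpace.toDual_symm_apply
  have : (inner ℝ v L : ℝ) = ℓ v := by
    rw [real_inner_comm]; rw [h1]; rfl
  rw [this]
  exact hℓ v

theorem master [CompleteSpace X] (G : Subgroup (X ≃ₗᵢ[ℝ] X)) (E C : X → ℝ)
    (hEc : Continuous E) (hCc : Continuous C)
    (hEG : ∀ g : G, ∀ u : X, E ((g : X ≃ₗᵢ[ℝ] X) u) = E u)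
    (hCG : ∀ g : G, ∀ u : X, C ((g : X ≃ₗᵢ[ℝ] X) u) = C u)
    (hC0 : C 0 = 0)
    (hEs : SplittingProperty E) (hCs : SplittingProperty C)
    (hEnn : ∀ x : X, 0 ≤ E x)
    (hEpos : ∀ u : X, u ≠ 0 → 0 < E u)
    (hEcoer : ∀ u : ℕ → X, Tendsto (fun n => ‖u n‖) atTop atTop →
      Tendsto (fun n => E (u n)) atTop atTop)
    (hEzero : ∀ u : ℕ → X, Tendsto (fun n => E (u n)) atTop (𝓝 0) →
      Tendsto (fun n => ‖u n‖) atTop (𝓝 0))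
    (δ : ℝ) (hδpos : 0 < δ)
    (hSne : {r : ℝ | ∃ v : X, C v ≠ 0 ∧ r = Jfun E C δ v}.Nonempty)
    (hmΛ0 : sInf {r : ℝ | ∃ v : X, C v ≠ 0 ∧ r = Jfun E C δ v} < Lambda0 G E C)
    (u : ℕ → X) (hCu : ∀ n, C (u n) ≠ 0)
    (hJu : Tendsto (fun n => Jfun E C δ (u n)) atTop
      (𝓝 (sInf {r : ℝ | ∃ v : X, C v ≠ 0 ∧ r = Jfun E C δ v}))) :
    GCompactSeq G u ∧ ∃ w : X, C w ≠ 0 ∧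
      Jfun E C δ w = sInf {r : ℝ | ∃ v : X, C v ≠ 0 ∧ r = Jfun E C δ v} := by
  set m : ℝ := sInf {r : ℝ | ∃ v : X, C v ≠ 0 ∧ r = Jfun E C δ v} with hm
  have hΛnn : ∀ x : X, 0 ≤ hylenicRatio E C x := fun x => div_nonneg (hEnn x) (abs_nonneg _)
  have hJlb : ∀ x : X, 0 ≤ Jfun E C δ x :=
    fun x => add_nonneg (hΛnn x) (mul_nonneg hδpos.le (hEnn x))
  have hΛleJ : ∀ x : X, hylenicRatio E C x ≤ Jfun E C δ x :=
    fun x => le_add_of_nonneg_right (mul_nonneg hδpos.le (hEnn x))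
  have hSbdd : BddBelow {r : ℝ | ∃ v : X, C v ≠ 0 ∧ r = Jfun E C δ v} := by
    refine ⟨0, fun r hr => ?_⟩
    obtain ⟨v, _, rfl⟩ := hr
    exact hJlb v
  have hmle : ∀ v : X, C v ≠ 0 → m ≤ Jfun E C δ v := fun v hv => csInf_le hSbdd ⟨v, hv, rfl⟩
  -- bound on J along the sequence
  obtain ⟨BJ, hBJ⟩ := hJu.bddAbove_range
  have hBJ' : ∀ n, Jfun E C δ (u n) ≤ BJ := fun n => hBJ (Set.mem_range_self n)
  have hBJ0 : 0 ≤ BJ := (hJlb (u 0)).trans (hBJ' 0)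
  have hEbd : ∀ n, E (u n) ≤ BJ / δ := by
    intro n
    rw [le_div_iff₀ hδpos]
    have := hΛnn (u n)
    have h2 := hBJ' n
    unfold Jfun at h2
    linarith
  -- the sequence is bounded in norm
  have hbd : ∃ M : ℝ, ∀ n, ‖u n‖ ≤ M := by
    by_contra hcon
    push_neg at hcon
    have hfreq : ∀ k : ℕ, ∃ᶠ n in atTop, (k : ℝ) ≤ ‖u n‖ := by
      intro k
      by_contra hf
      rw [not_frequently] at hf
      have hf' : ∀ᶠ n in atTop, ‖u n‖ ≤ (k : ℝ) := by
        filter_upwards [hf] with n hn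
        push_neg at hn
        exact hn.le
      obtain ⟨M, hM⟩ := bdd_of_eventually _ _ hf'
      obtain ⟨n, hn⟩ := hcon M
      exact absurd (hM n) (not_le.mpr hn)
    obtain ⟨φ, hφ, hφge⟩ := extraction_forall_of_frequently hfreq
    have hnorm : Tendsto (fun k => ‖u (φ k)‖) atTop atTop :=
      tendsto_atTop_mono hφge tendsto_natCast_atTop_atTop
    have hEinf := hEcoer (fun k => u (φ k)) hnorm
    obtain ⟨k, hk⟩ := (hEinf.eventually_gt_atTop (BJ / δ)).exists
    exact absurd (hEbd (φ k)) (not_le.mpr hk)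
  -- the sequence is not G-vanishing
  have hnotGV : ¬ GVanishing G u := by
    intro hGV
    have hL0bdd : BddBelow {l : ℝ | ∃ w : ℕ → X, GVanishing G w ∧ (∀ n, C (w n) ≠ 0) ∧
        l = liminf (fun n => hylenicRatio E C (w n)) atTop} := by
      refine ⟨0, fun l hl => ?_⟩
      obtain ⟨w, _, _, rfl⟩ := hl
      exact liminf_nonneg' _ (fun n => hΛnn _)
    have hΛ0le : Lambda0 G E C ≤ liminf (fun n => hylenicRatio E C (u n)) atTop :=
      csInf_le hL0bdd ⟨u, hGV, hCu, rfl⟩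
    have hbd1 : IsBoundedUnder (· ≥ ·) atTop (fun n => hylenicRatio E C (u n)) :=
      isBoundedUnder_of ⟨0, fun n => hΛnn (u n)⟩
    have hcob2 : IsCoboundedUnder (· ≥ ·) atTop (fun n => Jfun E C δ (u n)) := by
      apply Filter.IsBoundedUnder.isCoboundedUnder_ge
      exact isBoundedUnder_of ⟨BJ, fun n => hBJ' n⟩
    have hliminf := liminf_le_liminf (Eventually.of_forall fun n => hΛleJ (u n)) hbd1 hcob2
    rw [hJu.liminf_eq] at hliminf
    linarith [hΛ0le.trans hliminf]
  -- extract non-weakly-null translated subsequence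
  have hfail : ¬ ∀ φ : ℕ → ℕ, StrictMono φ → ∀ g : ℕ → G,
      WeakNullSeq (fun k => (g k : X ≃ₗᵢ[ℝ] X) (u (φ k))) := fun hall => hnotGV ⟨hbd, hall⟩
  push_neg at hfail
  obtain ⟨φ, hφ, g, hng⟩ := hfail
  unfold WeakNullSeq at hng
  push_neg at hng
  obtain ⟨v0, hv0⟩ := hng
  obtain ⟨ε, hε, hfr⟩ := freq_of_not_tendsto_zero _ hv0
  obtain ⟨ψ₁, hψ₁, hψ₁ge⟩ := extraction_of_frequently_atTop hfr
  obtain ⟨M, hM⟩ := hbd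
  have hMs : ∀ k, ‖(g (ψ₁ k) : X ≃ₗᵢ[ℝ] X) (u (φ (ψ₁ k)))‖ ≤ M := by
    intro k
    rw [LinearIsometryEquiv.norm_map]
    exact hM _
  obtain ⟨ψ₂, hψ₂, ub, hconv⟩ :=
    weak_seq_compact (fun k => (g (ψ₁ k) : X ≃ₗᵢ[ℝ] X) (u (φ (ψ₁ k)))) M hMs
  set θ : ℕ → ℕ := fun j => φ (ψ₁ (ψ₂ j)) with hθdef
  have hθ : StrictMono θ := hφ.comp (hψ₁.comp hψ₂)
  set u' : ℕ → X := fun j => (g (ψ₁ (ψ₂ j)) : X ≃ₗᵢ[ℝ] X) (u (θ j)) with hu'def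
  have hconv' : ∀ v : X, Tendsto (fun j => (inner ℝ v (u' j) : ℝ)) atTop (𝓝 (inner ℝ v ub)) :=
    fun v => hconv v
  have hubne : ub ≠ 0 := by
    intro h0
    have h1 : Tendsto (fun j => |(inner ℝ v0 (u' j) : ℝ)|) atTop (𝓝 |(inner ℝ v0 ub : ℝ)|) :=
      (hconv' v0).abs
    have h2 : ε ≤ |(inner ℝ v0 ub : ℝ)| :=
      ge_of_tendsto h1 (Eventually.of_forall fun j => hψ₁ge (ψ₂ j))
    rw [h0, inner_zero_right] at h2
    simp at h2
    linarith
  have hEinv : ∀ j, E (u' j) = E (u (θ j)) := fun j => hEG _ _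
  have hCinv : ∀ j, C (u' j) = C (u (θ j)) := fun j => hCG _ _
  have hCu' : ∀ j, C (u' j) ≠ 0 := fun j => by rw [hCinv]; exact hCu _
  have hJinv : ∀ j, Jfun E C δ (u' j) = Jfun E C δ (u (θ j)) := by
    intro j
    unfold Jfun hylenicRatio
    rw [hEinv, hCinv]
  have hJu' : Tendsto (fun j => Jfun E C δ (u' j)) atTop (𝓝 m) := by
    have h1 : Tendsto (fun j => Jfun E C δ (u (θ j))) atTop (𝓝 m) :=
      hJu.comp hθ.tendsto_atTop
    simpa only [hJinv] using h1
  have hEbd' : ∀ j, E (u' j) ≤ BJ / δ := fun j => (hEinv j) ▸ hEbd (θ j)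
  have hJbd' : ∀ j, Jfun E C δ (u' j) ≤ BJ := fun j => (hJinv j) ▸ hBJ' (θ j)
  set z : ℕ → X := fun j => u' j - ub with hzdef
  have hz : WeakNullSeq z := by
    intro x
    have h1 := (hconv' x).sub_const (inner ℝ x ub)
    simp only [sub_self] at h1
    have heq : (fun j => (inner ℝ x (u' j) : ℝ) - inner ℝ x ub) = fun j => (inner ℝ x (z j) : ℝ) := by
      funext j
      rw [hzdef]
      simp [inner_sub_right]
    rwa [heq] at h1
  have heq1 : ∀ j, ub + z j = u' j := fun j => by simp [hzdef]
  have hEsp : Tendsto (fun j => E (u' j) - E ub - E (z j)) atTop (𝓝 0) := by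
    have h1 := hEs ub z hz
    simpa only [heq1] using h1
  have hCsp : Tendsto (fun j => C (u' j) - C ub - C (z j)) atTop (𝓝 0) := by
    have h1 := hCs ub z hz
    simpa only [heq1] using h1
  set α : ℝ := E ub with hαdef
  have hα : 0 < α := hEpos ub hubne
  -- extract convergent energy of remainder
  have hEzbd : ∀ᶠ j in atTop, |E (z j)| ≤ BJ / δ + 1 + |α| := by
    have h1 : ∀ᶠ j in atTop, |E (u' j) - α - E (z j)| ≤ 1 :=
      hEsp.abs.eventually (by simpa using eventually_le_nhds (zero_lt_one))
    filter_upwards [h1] with j hj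
    rw [abs_of_nonneg (hEnn _)]
    have h2 := abs_le.mp hj
    have h3 := hEbd' j
    have h4 := abs_le.mp (le_refl |α|)
    have := neg_abs_le α
    linarith [h2.1, h2.2]
  obtain ⟨ρ₁, hρ₁, β, hβ⟩ := bw_real_ev _ _ hEzbd
  have hβ0 : 0 ≤ β := ge_of_tendsto hβ (Eventually.of_forall fun i => hEnn _)
  -- limits along the ρ₁-chain
  have hEz1 : Tendsto (fun i => E (z (ρ₁ i))) atTop (𝓝 β) := hβ
  have mk_Econv : ∀ (σ : ℕ → ℕ), StrictMono σ →
      Tendsto (fun i => E (z (σ i))) atTop (𝓝 β) →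
      Tendsto (fun i => E (u' (σ i))) atTop (𝓝 (α + β)) := by
    intro σ hσ hEz
    have h1 : Tendsto (fun i => (E (u' (σ i)) - α - E (z (σ i))) + α + E (z (σ i)))
        atTop (𝓝 (0 + α + β)) :=
      (((hEsp.comp hσ.tendsto_atTop).add tendsto_const_nhds).add hEz)
    have heq : (fun i => (E (u' (σ i)) - α - E (z (σ i))) + α + E (z (σ i)))
        = fun i => E (u' (σ i)) := funext fun i => by ring
    rw [heq] at h1
    simpa using h1
  by_cases hcase : Tendsto (fun i => C (z (ρ₁ i))) atTop (𝓝 0)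
  · -- CASE 1 : remainder charge vanishes
    have hE1 : Tendsto (fun i => E (u' (ρ₁ i))) atTop (𝓝 (α + β)) := mk_Econv ρ₁ hρ₁ hEz1
    have hC1 : Tendsto (fun i => C (u' (ρ₁ i))) atTop (𝓝 (C ub)) := by
      have h1 : Tendsto (fun i => (C (u' (ρ₁ i)) - C ub - C (z (ρ₁ i))) + C ub + C (z (ρ₁ i)))
          atTop (𝓝 (0 + C ub + 0)) :=
        (((hCsp.comp hρ₁.tendsto_atTop).add tendsto_const_nhds).add hcase)
      have heq : (fun i => (C (u' (ρ₁ i)) - C ub - C (z (ρ₁ i))) + C ub + C (z (ρ₁ i)))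
          = fun i => C (u' (ρ₁ i)) := funext fun i => by ring
      rw [heq] at h1
      simpa using h1
    have hΛJbd : ∀ᶠ i in atTop, E (u' (ρ₁ i)) / |C (u' (ρ₁ i))| ≤ BJ :=
      Eventually.of_forall fun i => (hΛleJ (u' (ρ₁ i))).trans (hJbd' (ρ₁ i))
    have hCubne : C ub ≠ 0 := by
      intro h0
      rw [h0] at hC1
      exact no_vanishing_denom (fun i => E (u' (ρ₁ i))) (fun i => C (u' (ρ₁ i)))
        (α + β) BJ (by linarith) hBJ0 hE1 hC1 (fun i => hCu' (ρ₁ i)) hΛJbd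
    have hγ : 0 < |C ub| := abs_pos.mpr hCubne
    have hΛ1 : Tendsto (fun i => hylenicRatio E C (u' (ρ₁ i))) atTop
        (𝓝 ((α + β) / |C ub|)) := by
      have := hE1.div hC1.abs (ne_of_gt hγ)
      exact this
    have hJ1 : Tendsto (fun i => Jfun E C δ (u' (ρ₁ i))) atTop
        (𝓝 ((α + β) / |C ub| + δ * (α + β))) := hΛ1.add (hE1.const_mul δ)
    have hmeq : m = (α + β) / |C ub| + δ * (α + β) :=
      tendsto_nhds_unique (hJu'.comp hρ₁.tendsto_atTop) hJ1
    have hmub : m ≤ α / |C ub| + δ * α := by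
      have := hmle ub hCubne
      unfold Jfun hylenicRatio at this
      exact this
    have hβeq : β = 0 := by
      by_contra hne
      have hβpos : 0 < β := lt_of_le_of_ne hβ0 (Ne.symm hne)
      have hdiv : 0 < β / |C ub| := div_pos hβpos hγ
      have hadd : (α + β) / |C ub| = α / |C ub| + β / |C ub| := add_div α β _
      nlinarith [mul_pos hδpos hβpos]
    have hEz0 : Tendsto (fun i => E (z (ρ₁ i))) atTop (𝓝 0) := hβeq ▸ hEz1
    have hz0 : Tendsto (fun i => ‖z (ρ₁ i)‖) atTop (𝓝 0) := hEzero _ hEz0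
    have hstrong : Tendsto (fun i => u' (ρ₁ i)) atTop (𝓝 ub) := by
      rw [tendsto_iff_norm_sub_tendsto_zero]
      exact hz0
    constructor
    · exact ⟨θ ∘ ρ₁, hθ.comp hρ₁, fun i => g (ψ₁ (ψ₂ (ρ₁ i))), ub, hstrong⟩
    · refine ⟨ub, hCubne, ?_⟩
      rw [hmeq, hβeq]
      unfold Jfun hylenicRatio
      rw [hαdef]
      ring
  · -- CASE 2 : remainder charge does not vanish — contradiction
    exfalso
    obtain ⟨a, ha, hfr2⟩ := freq_of_not_tendsto_zero _ hcase
    obtain ⟨ρ₂, hρ₂, hρ₂ge⟩ := extraction_of_frequently_atTop hfr2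
    set χ : ℕ → ℕ := fun i => ρ₁ (ρ₂ i) with hχdef
    have hχ : StrictMono χ := hρ₁.comp hρ₂
    have hEzχ : Tendsto (fun i => E (z (χ i))) atTop (𝓝 β) := hEz1.comp hρ₂.tendsto_atTop
    have hEχ : Tendsto (fun i => E (u' (χ i))) atTop (𝓝 (α + β)) := mk_Econv χ hχ hEzχ
    have hΛχ : Tendsto (fun i => hylenicRatio E C (u' (χ i))) atTop
        (𝓝 (m - δ * (α + β))) := by
      have h1 : Tendsto (fun i => Jfun E C δ (u' (χ i)) - δ * E (u' (χ i)))
          atTop (𝓝 (m - δ * (α + β))) :=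
        (hJu'.comp hχ.tendsto_atTop).sub (hEχ.const_mul δ)
      have heq : (fun i => Jfun E C δ (u' (χ i)) - δ * E (u' (χ i)))
          = fun i => hylenicRatio E C (u' (χ i)) := funext fun i => by unfold Jfun; ring
      rwa [heq] at h1
    have hlam0 : 0 ≤ m - δ * (α + β) :=
      ge_of_tendsto hΛχ (Eventually.of_forall fun i => hΛnn _)
    set μ : ℝ := (m - δ * (α + β)) + δ * α / 2 with hμdef
    have hμpos : 0 < μ := by
      have := mul_pos hδpos hα
      rw [hμdef]; linarith
    have hev1 : ∀ᶠ i in atTop, μ ≤ m - δ * E (z (χ i)) := by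
      have h1 : Tendsto (fun i => m - δ * E (z (χ i))) atTop (𝓝 (m - δ * β)) :=
        tendsto_const_nhds.sub (hEzχ.const_mul δ)
      refine h1.eventually (eventually_ge_nhds ?_)
      have := mul_pos hδpos hα
      rw [hμdef]; ring_nf; linarith
    have hCz0 : ∀ i, C (z (χ i)) ≠ 0 := by
      intro i h0
      have h1 := hρ₂ge i
      rw [show C (z (ρ₁ (ρ₂ i))) = C (z (χ i)) from rfl, h0] at h1
      simp at h1
      linarith
    have hstst : ∀ i, m ≤ E (z (χ i)) / |C (z (χ i))| + δ * E (z (χ i)) := by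
      intro i
      have := hmle (z (χ i)) (hCz0 i)
      unfold Jfun hylenicRatio at this
      exact this
    have hCbd : ∀ᶠ i in atTop, |C (z (χ i))| ≤ (β + 1) / μ := by
      have h2 : ∀ᶠ i in atTop, E (z (χ i)) ≤ β + 1 :=
        hEzχ.eventually (eventually_le_nhds (by linarith))
      filter_upwards [hev1, h2] with i h1 h2
      have h3 := hstst i
      have habs : 0 < |C (z (χ i))| := abs_pos.mpr (hCz0 i)
      have h5 : m - δ * E (z (χ i)) ≤ E (z (χ i)) / |C (z (χ i))| := by linarith [h3]
      have h4 : μ ≤ E (z (χ i)) / |C (z (χ i))| := le_trans h1 h5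
      rw [le_div_iff₀ habs] at h4
      rw [le_div_iff₀ hμpos]
      nlinarith
    obtain ⟨ρ₃, hρ₃, γ₁, hγ₁⟩ := bw_real_ev _ _ hCbd
    set ξ : ℕ → ℕ := fun t => χ (ρ₃ t) with hξdef
    have hξ : StrictMono ξ := hχ.comp hρ₃
    have hγ₁a : a ≤ |γ₁| :=
      ge_of_tendsto hγ₁.abs (Eventually.of_forall fun t => hρ₂ge (ρ₃ t))
    have hγ₁pos : 0 < |γ₁| := lt_of_lt_of_le ha hγ₁a
    have hEzξ : Tendsto (fun t => E (z (ξ t))) atTop (𝓝 β) := hEzχ.comp hρ₃.tendsto_atTop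
    have hEξ : Tendsto (fun t => E (u' (ξ t))) atTop (𝓝 (α + β)) := hEχ.comp hρ₃.tendsto_atTop
    have hΛξ : Tendsto (fun t => hylenicRatio E C (u' (ξ t))) atTop (𝓝 (m - δ * (α + β))) :=
      hΛχ.comp hρ₃.tendsto_atTop
    have hCξ : Tendsto (fun t => C (u' (ξ t))) atTop (𝓝 (C ub + γ₁)) := by
      have h1 : Tendsto (fun t => (C (u' (ξ t)) - C ub - C (z (ξ t))) + C ub + C (z (ξ t)))
          atTop (𝓝 (0 + C ub + γ₁)) :=
        (((hCsp.comp hξ.tendsto_atTop).add tendsto_const_nhds).add hγ₁)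
      have heq : (fun t => (C (u' (ξ t)) - C ub - C (z (ξ t))) + C ub + C (z (ξ t)))
          = fun t => C (u' (ξ t)) := funext fun t => by ring
      rw [heq] at h1
      convert h1 using 2
      ring
    have hΛJbdξ : ∀ᶠ t in atTop, E (u' (ξ t)) / |C (u' (ξ t))| ≤ BJ :=
      Eventually.of_forall fun t => (hΛleJ (u' (ξ t))).trans (hJbd' (ξ t))
    have hsne : C ub + γ₁ ≠ 0 := by
      intro h0
      rw [h0] at hCξ
      exact no_vanishing_denom (fun t => E (u' (ξ t))) (fun t => C (u' (ξ t)))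
        (α + β) BJ (by linarith) hBJ0 hEξ hCξ (fun t => hCu' (ξ t)) hΛJbdξ
    have hspos : 0 < |C ub + γ₁| := abs_pos.mpr hsne
    have hlameq : m - δ * (α + β) = (α + β) / |C ub + γ₁| :=
      tendsto_nhds_unique hΛξ (hEξ.div hCξ.abs (ne_of_gt hspos))
    have hlim2 : m ≤ β / |γ₁| + δ * β := by
      have h1 : Tendsto (fun t => E (z (ξ t)) / |C (z (ξ t))| + δ * E (z (ξ t)))
          atTop (𝓝 (β / |γ₁| + δ * β)) :=
        (hEzξ.div hγ₁.abs (ne_of_gt hγ₁pos)).add (hEzξ.const_mul δ)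
      exact ge_of_tendsto h1 (Eventually.of_forall fun t => hstst (ρ₃ t))
    have hβpos : 0 < β := by
      by_contra hne
      have hβeq : β = 0 := le_antisymm (not_lt.mp hne) hβ0
      rw [hβeq] at hlim2
      simp at hlim2
      have h5 : δ * (α + β) ≤ m := by linarith
      rw [hβeq] at h5
      have := mul_pos hδpos hα
      simp at h5
      linarith
    have hmfin : m = (α + β) / |C ub + γ₁| + δ * α + δ * β := by
      have : δ * (α + β) = δ * α + δ * β := by ring
      linarith [hlameq]
    by_cases hCub : C ub = 0
    · rw [hCub, zero_add] at hmfin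
      have hadd : (α + β) / |γ₁| = α / |γ₁| + β / |γ₁| := add_div α β _
      have hdiv : 0 < α / |γ₁| := div_pos hα hγ₁pos
      have := mul_pos hδpos hα
      linarith
    · have hγ : 0 < |C ub| := abs_pos.mpr hCub
      have hmub : m ≤ α / |C ub| + δ * α := by
        have := hmle ub hCub
        unfold Jfun hylenicRatio at this
        exact this
      have hss : |C ub + γ₁| ≤ |C ub| + |γ₁| := abs_add_le _ _
      have hmono : (α + β) / (|C ub| + |γ₁|) ≤ (α + β) / |C ub + γ₁| :=
        div_le_div_of_nonneg_left (by linarith) hspos hss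
      have hmed := mediant_le α β |C ub| |γ₁| hα.le hβ0 hγ hγ₁pos
      have hδβ := mul_pos hδpos hβpos
      have hδα := mul_pos hδpos hα
      rcases le_total (α / |C ub|) (β / |γ₁|) with hmin | hmin
      · rw [min_eq_left hmin] at hmed
        linarith
      · rw [min_eq_right hmin] at hmed
        linarith

/-- Existence of minimizers (Theorem 15 / `legicomp`): under (EC-0)–(EC-3) and
the hylomorphy condition, for every `δ ∈ (0, δ_∞)` every minimizing sequence
of `J_δ` over `{u | C u ≠ 0}` is `G`-compact, and `J_δ` attains its infimum at
some `u_δ ≠ 0` with `C u_δ ≠ 0`. -/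
theorem stmt_6 [CompleteSpace X] (G : Subgroup (X ≃ₗᵢ[ℝ] X)) (E C : X → ℝ)
    (hEc : Continuous E) (hCc : Continuous C)
    (hEG : ∀ g : G, ∀ u : X, E ((g : X ≃ₗᵢ[ℝ] X) u) = E u)
    (hCG : ∀ g : G, ∀ u : X, C ((g : X ≃ₗᵢ[ℝ] X) u) = C u)
    (hE0 : E 0 = 0) (hC0 : C 0 = 0)
    (hEs : SplittingProperty E) (hCs : SplittingProperty C)
    (hEpos : ∀ u : X, u ≠ 0 → 0 < E u)
    (hEcoer : ∀ u : ℕ → X, Tendsto (fun n => ‖u n‖) atTop atTop →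
      Tendsto (fun n => E (u n)) atTop atTop)
    (hEzero : ∀ u : ℕ → X, Tendsto (fun n => E (u n)) atTop (𝓝 0) →
      Tendsto (fun n => ‖u n‖) atTop (𝓝 0))
    (hhylo : HylomorphyCondition G E C)
    (δ : ℝ) (hδ : MemDeltaInterval G E C δ) :
    (∀ u : ℕ → X, (∀ n, C (u n) ≠ 0) →
      Tendsto (fun n => Jfun E C δ (u n)) atTop
        (𝓝 (sInf {r : ℝ | ∃ v : X, C v ≠ 0 ∧ r = Jfun E C δ v})) →
      GCompactSeq G u) ∧
    ∃ uδ : X, uδ ≠ 0 ∧ C uδ ≠ 0 ∧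
      ∀ v : X, C v ≠ 0 → Jfun E C δ uδ ≤ Jfun E C δ v := by
  obtain ⟨hδpos, δ', hδδ', v₀, hCv₀, hJv₀⟩ := hδ
  have hEnn : ∀ x : X, 0 ≤ E x := by
    intro x
    by_cases h : x = 0
    · rw [h, hE0]
    · exact (hEpos x h).le
  have hJlb : ∀ x : X, 0 ≤ Jfun E C δ x := fun x =>
    add_nonneg (div_nonneg (hEnn x) (abs_nonneg _)) (mul_nonneg hδpos.le (hEnn x))
  have hSbdd : BddBelow {r : ℝ | ∃ v : X, C v ≠ 0 ∧ r = Jfun E C δ v} := by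
    refine ⟨0, fun r hr => ?_⟩
    obtain ⟨v, _, rfl⟩ := hr
    exact hJlb v
  have hSne : {r : ℝ | ∃ v : X, C v ≠ 0 ∧ r = Jfun E C δ v}.Nonempty :=
    ⟨Jfun E C δ v₀, v₀, hCv₀, rfl⟩
  have hmle : ∀ v : X, C v ≠ 0 → sInf {r : ℝ | ∃ v : X, C v ≠ 0 ∧ r = Jfun E C δ v} ≤
      Jfun E C δ v := fun v hv => csInf_le hSbdd ⟨v, hv, rfl⟩
  have hmΛ0 : sInf {r : ℝ | ∃ v : X, C v ≠ 0 ∧ r = Jfun E C δ v} < Lambda0 G E C := by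
    refine lt_of_le_of_lt ((hmle v₀ hCv₀).trans ?_) hJv₀
    unfold Jfun
    exact add_le_add_right (mul_le_mul_of_nonneg_right hδδ'.le (hEnn v₀)) _
  constructor
  · intro u hCu hJu
    exact (master G E C hEc hCc hEG hCG hC0 hEs hCs hEnn hEpos hEcoer hEzero δ hδpos
      hSne hmΛ0 u hCu hJu).1
  · -- construct a minimizing sequence
    set m : ℝ := sInf {r : ℝ | ∃ v : X, C v ≠ 0 ∧ r = Jfun E C δ v} with hmdef
    have hseq : ∀ n : ℕ, ∃ v : X, C v ≠ 0 ∧ Jfun E C δ v < m + 1 / (n + 1) := by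
      intro n
      obtain ⟨r, hr, hlt⟩ := Real.lt_sInf_add_pos hSne
        (show (0:ℝ) < 1 / (n + 1) by positivity)
      obtain ⟨v, hv, rfl⟩ := hr
      exact ⟨v, hv, hlt⟩
    choose vs hvC hvJ using hseq
    have hJv : Tendsto (fun n => Jfun E C δ (vs n)) atTop (𝓝 m) := by
      have hub : Tendsto (fun n : ℕ => m + 1 / ((n : ℝ) + 1)) atTop (𝓝 (m + 0)) :=
        tendsto_const_nhds.add tendsto_one_div_add_atTop_nhds_zero_nat
      rw [add_zero] at hub
      exact tendsto_of_tendsto_of_tendsto_of_le_of_le tendsto_const_nhds hub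
        (fun n => hmle (vs n) (hvC n)) (fun n => (hvJ n).le)
    obtain ⟨-, w, hCw, hJw⟩ := master G E C hEc hCc hEG hCG hC0 hEs hCs hEnn hEpos
      hEcoer hEzero δ hδpos hSne hmΛ0 vs hvC hJv
    refine ⟨w, ?_, hCw, fun v hv => ?_⟩
    · intro h0
      rw [h0, hC0] at hCw
      exact hCw rfl
    · rw [hJw]
      exact hmle v hv
end

section
/- Let X be a real Hilbert space, E, C : X → ℝ, and let 0 < δ₁ < δ₂. Suppose u₁, u₂ ∈ X satisfy C(u₁) ≠ 0, C(u₂) ≠ 0, E(u₁) > 0, E(u₂) > 0, u₁ minimizes J_{δ₁} over {u : C(u) ≠ 0} and u₂ minimizes J_{δ₂} over {u : C(u) ≠ 0}. Then: (a) J_{δ₁}(u₁) < J_{δ₂}(u₂); (b) E(u₁) ≥ E(u₂); (c) Λ(u₁) ≤ Λ(u₂); (d) |C(u₁)| ≥ |C(u₂)|. -/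
open Filter Topology

variable {X : Type*} [NormedAddCommGroup X] [InnerProductSpace ℝ X]

/-- Lemma on comparison of minimizers of `J_{δ₁}` and `J_{δ₂}` for
`0 < δ₁ < δ₂`: (a) `J_{δ₁}(u₁) < J_{δ₂}(u₂)`; (b) `E u₁ ≥ E u₂`;
(c) `Λ u₁ ≤ Λ u₂`; (d) `|C u₁| ≥ |C u₂|`. -/
theorem stmt_8 [CompleteSpace X] (E C : X → ℝ) (δ₁ δ₂ : ℝ)
    (hδ₁ : 0 < δ₁) (hδ₁₂ : δ₁ < δ₂)
    (u₁ u₂ : X) (hC₁ : C u₁ ≠ 0) (hC₂ : C u₂ ≠ 0)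
    (hE₁ : 0 < E u₁) (hE₂ : 0 < E u₂)
    (hmin₁ : ∀ v : X, C v ≠ 0 → Jfun E C δ₁ u₁ ≤ Jfun E C δ₁ v)
    (hmin₂ : ∀ v : X, C v ≠ 0 → Jfun E C δ₂ u₂ ≤ Jfun E C δ₂ v) :
    Jfun E C δ₁ u₁ < Jfun E C δ₂ u₂ ∧
    E u₂ ≤ E u₁ ∧
    hylenicRatio E C u₁ ≤ hylenicRatio E C u₂ ∧
    |C u₂| ≤ |C u₁| := by
  have h1 := hmin₁ u₂ hC₂
  have h2 := hmin₂ u₁ hC₁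
  simp only [Jfun] at h1 h2 ⊢
  have hEle : E u₂ ≤ E u₁ := by nlinarith
  have hΛ : hylenicRatio E C u₁ ≤ hylenicRatio E C u₂ := by nlinarith
  refine ⟨by nlinarith, hEle, hΛ, ?_⟩
  have hΛ₁pos : 0 < hylenicRatio E C u₁ :=
    div_pos hE₁ (abs_pos.mpr hC₁)
  have hC₁eq : |C u₁| = E u₁ / hylenicRatio E C u₁ := by
    rw [hylenicRatio, div_div_cancel₀ hE₁.ne']
  have hC₂eq : |C u₂| = E u₂ / hylenicRatio E C u₂ := by
    rw [hylenicRatio, div_div_cancel₀ hE₂.ne']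
  rw [hC₁eq, hC₂eq]
  exact div_le_div₀ hE₁.le hEle hΛ₁pos hΛ
end

section
/- Let X be a real Hilbert space and G a group of linear isometric bijections of X. Let E, C : X → ℝ be continuously Fréchet differentiable, G-invariant, with E(0) = C(0) = 0, both satisfying the splitting property, and with E coercive: E(u) > 0 for every u ≠ 0, E(u_n) → ∞ whenever ‖u_n‖ → ∞, and ‖u_n‖ → 0 whenever E(u_n) → 0. Assume the hylomorphy condition inf{Λ(u) : u ∈ X, C(u) ≠ 0} < Λ₀, and assume that E′(u) = 0 and C′(u) = 0 together imply u = 0. Then for every δ₁, δ₂ ∈ (0, δ_∞) with δ₁ < δ₂, any minimizers u₁ of J_{δ₁} and u₂ of J_{δ₂} (over {u : C(u) ≠ 0}) satisfy: (a) E(u₁) > E(u₂); (b) Λ(u₁) < Λ(u₂); (c) |C(u₁)| > |C(u₂)|. -/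
open Filter Topology

variable {X : Type*} [NormedAddCommGroup X] [InnerProductSpace ℝ X]

lemma aux_main (E C : X → ℝ)
    (hEd : ContDiff ℝ 1 E) (hCd : ContDiff ℝ 1 C) (hC0 : C 0 = 0)
    (hEpos : ∀ u : X, u ≠ 0 → 0 < E u)
    (hnd : ∀ u : X, fderiv ℝ E u = 0 → fderiv ℝ C u = 0 → u = 0)
    (δ₁ δ₂ : ℝ) (h12 : δ₁ ≠ δ₂) (u : X) (hCu : C u ≠ 0)
    (hmin1 : ∀ v : X, C v ≠ 0 → Jfun E C δ₁ u ≤ Jfun E C δ₁ v)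
    (hmin2 : ∀ v : X, C v ≠ 0 → Jfun E C δ₂ u ≤ Jfun E C δ₂ v) : False := by
  classical
  have hu0 : u ≠ 0 := fun h => hCu (h ▸ hC0)
  have hEu : 0 < E u := hEpos u hu0
  set s : ℝ := if 0 < C u then 1 else -1 with hs_def
  have hs : 0 < s * C u := by
    by_cases hc : 0 < C u
    · rw [hs_def, if_pos hc, one_mul]; exact hc
    · have hlt : C u < 0 := lt_of_le_of_ne (not_lt.mp hc) hCu
      rw [hs_def, if_neg hc]; nlinarith
  have hsne : s ≠ 0 := by
    intro h; rw [h, zero_mul] at hs; exact lt_irrefl (0:ℝ) hs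
  have habs : ∀ v : X, 0 < s * C v → |C v| = s * C v := by
    intro v hv
    by_cases hc : 0 < C u
    · rw [hs_def, if_pos hc, one_mul] at hv ⊢
      exact abs_of_pos hv
    · rw [hs_def, if_neg hc] at hv ⊢
      have hlt : C v < 0 := by nlinarith
      rw [abs_of_neg hlt]; ring
  have hE' : HasFDerivAt E (fderiv ℝ E u) u :=
    ((hEd.differentiable one_ne_zero) u).hasFDerivAt
  have hC' : HasFDerivAt C (fderiv ℝ C u) u :=
    ((hCd.differentiable one_ne_zero) u).hasFDerivAt
  set D := fderiv ℝ E u with hD_def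
  set K := fderiv ℝ C u with hK_def
  have hsC : HasFDerivAt (fun v => s * C v) (s • K) u := hC'.const_mul s
  have hinv : HasFDerivAt (fun v => (s * C v)⁻¹)
      ((-((s * C u) ^ 2)⁻¹) • (s • K)) u := by
    have := (hasDerivAt_inv hs.ne').comp_hasFDerivAt u hsC
    exact this
  set A : X →L[ℝ] ℝ :=
      E u • ((-((s * C u) ^ 2)⁻¹) • (s • K)) + (s * C u)⁻¹ • D with hA_def
  have hdiv : HasFDerivAt (fun v => E v / (s * C v)) A u := by
    simp only [div_eq_mul_inv]
    exact hE'.mul hinv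
  have hnhds : {v : X | 0 < s * C v} ∈ 𝓝 u :=
    (isOpen_lt continuous_const (continuous_const.mul hCd.continuous)).mem_nhds hs
  have hkey : ∀ δ : ℝ, (∀ v : X, C v ≠ 0 → Jfun E C δ u ≤ Jfun E C δ v) →
      A + δ • D = 0 := by
    intro δ hmin
    have hg : HasFDerivAt (fun v => E v / (s * C v) + δ * E v) (A + δ • D) u :=
      hdiv.add (hE'.const_mul δ)
    have hloc : IsLocalMin (fun v => E v / (s * C v) + δ * E v) u := by
      filter_upwards [hnhds] with v hv
      have hCv : C v ≠ 0 := by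
        intro h; rw [h, mul_zero] at hv; exact lt_irrefl 0 hv
      have h1 : Jfun E C δ u ≤ Jfun E C δ v := hmin v hCv
      have e1 : Jfun E C δ u = E u / (s * C u) + δ * E u := by
        simp [Jfun, hylenicRatio, habs u hs]
      have e2 : Jfun E C δ v = E v / (s * C v) + δ * E v := by
        simp [Jfun, hylenicRatio, habs v hv]
      rw [e1, e2] at h1; exact h1
    exact hloc.hasFDerivAt_eq_zero hg
  have h1 : A + δ₁ • D = 0 := hkey δ₁ hmin1
  have h2 : A + δ₂ • D = 0 := hkey δ₂ hmin2
  have hD : D = 0 := by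
    ext x
    have e1 := congrArg (fun f : X →L[ℝ] ℝ => f x) h1
    have e2 := congrArg (fun f : X →L[ℝ] ℝ => f x) h2
    simp only [ContinuousLinearMap.add_apply, ContinuousLinearMap.smul_apply,
      smul_eq_mul, ContinuousLinearMap.zero_apply] at e1 e2
    have h3 : (δ₁ - δ₂) * D x = 0 := by linarith
    rcases mul_eq_zero.mp h3 with h | h
    · exact absurd (by linarith : δ₁ = δ₂) h12
    · simpa using h
  have hA0 : A = 0 := by
    have h1' := h1
    rw [hD] at h1'
    simpa using h1'
  have hK : K = 0 := by
    ext x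
    have e1 := congrArg (fun f : X →L[ℝ] ℝ => f x) hA0
    simp only [hA_def, hD, ContinuousLinearMap.add_apply, ContinuousLinearMap.smul_apply,
      ContinuousLinearMap.neg_apply, smul_eq_mul, ContinuousLinearMap.zero_apply,
      mul_zero, add_zero, mul_neg, neg_mul, neg_eq_zero] at e1
    have hsq : ((s * C u) ^ 2 : ℝ) ≠ 0 := by positivity
    have hne2 : (((s * C u) ^ 2)⁻¹ : ℝ) ≠ 0 := inv_ne_zero hsq
    have e2 : E u * (((s * C u) ^ 2)⁻¹ * (s * K x)) = 0 := e1
    rcases mul_eq_zero.mp e2 with h | h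
    · exact absurd h hEu.ne'
    rcases mul_eq_zero.mp h with h | h
    · exact absurd h hne2
    rcases mul_eq_zero.mp h with h | h
    · exact absurd h hsne
    · simpa using h
  exact hu0 (hnd u hD hK)

/-- Comparison of minimizers of `J_{δ₁}` and `J_{δ₂}` (Lemma 17 / `BB`):
under (EC-0)–(EC-3), hylomorphy and the nondegeneracy condition
`E'(u) = C'(u) = 0 ⇒ u = 0`, for `δ₁ < δ₂` in `(0, δ_∞)` any minimizers
satisfy strict inequalities `E u₁ > E u₂`, `Λ u₁ < Λ u₂`, `|C u₁| > |C u₂|`. -/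
theorem stmt_9 [CompleteSpace X] (G : Subgroup (X ≃ₗᵢ[ℝ] X)) (E C : X → ℝ)
    (hEd : ContDiff ℝ 1 E) (hCd : ContDiff ℝ 1 C)
    (hEG : ∀ g : G, ∀ u : X, E ((g : X ≃ₗᵢ[ℝ] X) u) = E u)
    (hCG : ∀ g : G, ∀ u : X, C ((g : X ≃ₗᵢ[ℝ] X) u) = C u)
    (hE0 : E 0 = 0) (hC0 : C 0 = 0)
    (hEs : SplittingProperty E) (hCs : SplittingProperty C)
    (hEpos : ∀ u : X, u ≠ 0 → 0 < E u)
    (hEcoer : ∀ u : ℕ → X, Tendsto (fun n => ‖u n‖) atTop atTop →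
      Tendsto (fun n => E (u n)) atTop atTop)
    (hEzero : ∀ u : ℕ → X, Tendsto (fun n => E (u n)) atTop (𝓝 0) →
      Tendsto (fun n => ‖u n‖) atTop (𝓝 0))
    (hhylo : HylomorphyCondition G E C)
    (hnd : ∀ u : X, fderiv ℝ E u = 0 → fderiv ℝ C u = 0 → u = 0)
    (δ₁ δ₂ : ℝ) (hδ₁ : MemDeltaInterval G E C δ₁)
    (hδ₂ : MemDeltaInterval G E C δ₂) (h12 : δ₁ < δ₂)
    (u₁ u₂ : X) (hC₁ : C u₁ ≠ 0) (hC₂ : C u₂ ≠ 0)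
    (hmin₁ : ∀ v : X, C v ≠ 0 → Jfun E C δ₁ u₁ ≤ Jfun E C δ₁ v)
    (hmin₂ : ∀ v : X, C v ≠ 0 → Jfun E C δ₂ u₂ ≤ Jfun E C δ₂ v) :
    E u₂ < E u₁ ∧
    hylenicRatio E C u₁ < hylenicRatio E C u₂ ∧
    |C u₂| < |C u₁| := by
  have hδ₁pos : 0 < δ₁ := hδ₁.1
  have hne12 : δ₁ ≠ δ₂ := ne_of_lt h12
  have hu₂0 : u₂ ≠ 0 := fun h => hC₂ (h ▸ hC0)
  have hEu₂ : 0 < E u₂ := hEpos u₂ hu₂0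
  have h1 := hmin₁ u₂ hC₂
  have h2 := hmin₂ u₁ hC₁
  simp only [Jfun] at h1 h2
  have hEle : E u₂ ≤ E u₁ := by nlinarith
  have hElt : E u₂ < E u₁ := by
    rcases lt_or_eq_of_le hEle with h | heq
    · exact h
    · exfalso
      have hJeq1 : Jfun E C δ₁ u₂ = Jfun E C δ₁ u₁ := by
        simp only [Jfun]; nlinarith
      have hmin1' : ∀ v : X, C v ≠ 0 → Jfun E C δ₁ u₂ ≤ Jfun E C δ₁ v := by
        intro v hv
        rw [hJeq1]
        exact hmin₁ v hv
      exact aux_main E C hEd hCd hC0 hEpos hnd δ₁ δ₂ hne12 u₂ hC₂ hmin1' hmin₂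
  have hΛlt : hylenicRatio E C u₁ < hylenicRatio E C u₂ := by
    nlinarith [mul_pos hδ₁pos (sub_pos.mpr hElt)]
  refine ⟨hElt, hΛlt, ?_⟩
  have habs₁ : 0 < |C u₁| := abs_pos.mpr hC₁
  have habs₂ : 0 < |C u₂| := abs_pos.mpr hC₂
  have hd : E u₁ * |C u₂| < E u₂ * |C u₁| := by
    have := hΛlt
    simp only [hylenicRatio] at this
    exact (div_lt_div_iff₀ habs₁ habs₂).mp this
  nlinarith
end

section
/- Let (X, d) be a metric space and G a group of bijections of X acting by isometries (d(gu, gv) = d(u, v) for all g ∈ G, u, v ∈ X). Let V : X → ℝ be continuous, G-invariant, nonnegative, with infimum 0 attained, such that every minimizing sequence of V is G-compact, and let Γ = V⁻¹(0) be the (nonempty) set of minimizers of V. Then: (i) Γ is G-compact (every sequence in Γ is G-compact); and (ii) for every sequence (u_n) in X, V(u_n) → 0 if and only if d(u_n, Γ) → 0. -/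
open Filter Topology

/-- Lemma LC: let `G` be a group of bijections of a metric space `X` acting by
isometries, and `V : X → ℝ` continuous, `G`-invariant, nonnegative, attaining
its infimum `0`, such that every minimizing sequence of `V` is `G`-compact.
Let `Γ = V⁻¹(0)`. Then (i) every sequence in `Γ` is `G`-compact, and
(ii) `V (u n) → 0 ↔ dist (u n, Γ) → 0` for every sequence `(u n)`. -/
theorem stmt_11 {X : Type*} [MetricSpace X] (G : Subgroup (Equiv.Perm X))
    (hiso : ∀ g : G, ∀ u v : X,
      dist ((g : Equiv.Perm X) u) ((g : Equiv.Perm X) v) = dist u v)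
    (V : X → ℝ) (hVc : Continuous V)
    (hVG : ∀ g : G, ∀ u : X, V ((g : Equiv.Perm X) u) = V u)
    (hV0 : ∀ u : X, 0 ≤ V u)
    (hne : ∃ u : X, V u = 0)
    (hmin : ∀ u : ℕ → X, Tendsto (fun n => V (u n)) atTop (𝓝 0) →
      ∃ φ : ℕ → ℕ, StrictMono φ ∧ ∃ g : ℕ → G, ∃ L : X,
        Tendsto (fun k => ((g k : Equiv.Perm X)) (u (φ k))) atTop (𝓝 L)) :
    (∀ u : ℕ → X, (∀ n, V (u n) = 0) →
      ∃ φ : ℕ → ℕ, StrictMono φ ∧ ∃ g : ℕ → G, ∃ L : X,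
        Tendsto (fun k => ((g k : Equiv.Perm X)) (u (φ k))) atTop (𝓝 L)) ∧
    (∀ u : ℕ → X, Tendsto (fun n => V (u n)) atTop (𝓝 0) ↔
      Tendsto (fun n => Metric.infDist (u n) (V ⁻¹' {0})) atTop (𝓝 0)) := by
  obtain ⟨w, hw⟩ := hne
  have hΓne : (V ⁻¹' {0}).Nonempty := ⟨w, hw⟩
  constructor
  · intro u hu
    exact hmin u (by simp [hu, tendsto_const_nhds])
  · intro u
    constructor
    · -- V (u n) → 0 → infDist → 0
      intro h
      apply tendsto_of_subseq_tendsto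
      intro ns hns
      have h' : Tendsto (fun n => V (u (ns n))) atTop (𝓝 0) := h.comp hns
      obtain ⟨φ, hφ, g, L, hgL⟩ := hmin (fun n => u (ns n)) h'
      refine ⟨φ, ?_⟩
      -- V L = 0
      have hVL : V L = 0 := by
        have h1 : Tendsto (fun k => V ((g k : Equiv.Perm X) (u (ns (φ k)))))
            atTop (𝓝 (V L)) := (hVc.continuousAt.tendsto.comp hgL)
        have h2 : Tendsto (fun k => V ((g k : Equiv.Perm X) (u (ns (φ k)))))
            atTop (𝓝 0) := by
          simpa [hVG, Function.comp_def] using h'.comp hφ.tendsto_atTop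
        exact tendsto_nhds_unique h1 h2
      -- infDist (u (ns (φ k))) Γ ≤ dist (g k (u ...), L) → 0
      have hdist : Tendsto (fun k => dist ((g k : Equiv.Perm X) (u (ns (φ k)))) L)
          atTop (𝓝 0) := tendsto_iff_dist_tendsto_zero.mp hgL
      have key : ∀ k, Metric.infDist (u (ns (φ k))) (V ⁻¹' {0})
          ≤ dist ((g k : Equiv.Perm X) (u (ns (φ k)))) L := by
        intro k
        have hmem : ((g k)⁻¹ : G).1 L ∈ V ⁻¹' {0} :=
          (hVG ((g k)⁻¹) L).trans hVL
        calc Metric.infDist (u (ns (φ k))) (V ⁻¹' {0})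
            ≤ dist (u (ns (φ k))) (((g k)⁻¹ : G).1 L) := Metric.infDist_le_dist_of_mem hmem
          _ = dist ((g k : Equiv.Perm X) (u (ns (φ k))))
              ((g k : Equiv.Perm X) (((g k)⁻¹ : G).1 L)) := (hiso (g k) _ _).symm
          _ = dist ((g k : Equiv.Perm X) (u (ns (φ k)))) L := by
              congr 1
              have : ((g k : Equiv.Perm X) * ((g k)⁻¹ : G).1) = 1 := by
                rw [← Subgroup.coe_mul, mul_inv_cancel]; rfl
              calc (g k : Equiv.Perm X) (((g k)⁻¹ : G).1 L)
                  = ((g k : Equiv.Perm X) * ((g k)⁻¹ : G).1) L := rfl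
                _ = L := by rw [this]; rfl
      exact squeeze_zero (fun k => Metric.infDist_nonneg) key hdist
    · -- infDist → 0 → V (u n) → 0
      intro h
      apply tendsto_of_subseq_tendsto
      intro ns hns
      have h' : Tendsto (fun n => Metric.infDist (u (ns n)) (V ⁻¹' {0}))
          atTop (𝓝 0) := h.comp hns
      -- choose γ n ∈ Γ close to u (ns n)
      have hch : ∀ n : ℕ, ∃ γ ∈ V ⁻¹' {0},
          dist (u (ns n)) γ < Metric.infDist (u (ns n)) (V ⁻¹' {0}) + 1 / (n + 1) := by
        intro n
        apply (Metric.infDist_lt_iff hΓne).mp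
        have : (0 : ℝ) < 1 / (n + 1) := by positivity
        linarith
      choose γ hγΓ hγd using hch
      have hγV : ∀ n, V (γ n) = 0 := fun n => hγΓ n
      obtain ⟨φ, hφ, g, L, hgL⟩ := hmin γ (by simp [hγV, tendsto_const_nhds])
      refine ⟨φ, ?_⟩
      have hVL : V L = 0 := by
        have h1 : Tendsto (fun k => V ((g k : Equiv.Perm X) (γ (φ k))))
            atTop (𝓝 (V L)) := hVc.continuousAt.tendsto.comp hgL
        have h2 : Tendsto (fun k => V ((g k : Equiv.Perm X) (γ (φ k))))
            atTop (𝓝 0) := by simp [hVG, hγV, tendsto_const_nhds]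
        exact tendsto_nhds_unique h1 h2
      -- dist (u (ns (φ k))) (γ (φ k)) → 0
      have hd0 : Tendsto (fun k => dist (u (ns (φ k))) (γ (φ k))) atTop (𝓝 0) := by
        have hub : Tendsto (fun k => Metric.infDist (u (ns (φ k))) (V ⁻¹' {0})
            + 1 / ((φ k : ℝ) + 1)) atTop (𝓝 (0 + 0)) := by
          apply Tendsto.add (h'.comp hφ.tendsto_atTop)
          exact tendsto_one_div_add_atTop_nhds_zero_nat.comp hφ.tendsto_atTop
        rw [add_zero] at hub
        exact squeeze_zero (fun k => dist_nonneg) (fun k => (hγd (φ k)).le) hub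
      -- g k (u (ns (φ k))) → L
      have hguL : Tendsto (fun k => (g k : Equiv.Perm X) (u (ns (φ k)))) atTop (𝓝 L) := by
        rw [tendsto_iff_dist_tendsto_zero]
        have hle : ∀ k, dist ((g k : Equiv.Perm X) (u (ns (φ k)))) L
            ≤ dist (u (ns (φ k))) (γ (φ k)) + dist ((g k : Equiv.Perm X) (γ (φ k))) L := by
          intro k
          calc dist ((g k : Equiv.Perm X) (u (ns (φ k)))) L
              ≤ dist ((g k : Equiv.Perm X) (u (ns (φ k)))) ((g k : Equiv.Perm X) (γ (φ k)))
                + dist ((g k : Equiv.Perm X) (γ (φ k))) L := dist_triangle _ _ _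
            _ = dist (u (ns (φ k))) (γ (φ k))
                + dist ((g k : Equiv.Perm X) (γ (φ k))) L := by rw [hiso]
        have hub : Tendsto (fun k => dist (u (ns (φ k))) (γ (φ k))
            + dist ((g k : Equiv.Perm X) (γ (φ k))) L) atTop (𝓝 (0 + 0)) :=
          hd0.add (tendsto_iff_dist_tendsto_zero.mp hgL)
        rw [add_zero] at hub
        exact squeeze_zero (fun k => dist_nonneg) hle hub
      have : Tendsto (fun k => V ((g k : Equiv.Perm X) (u (ns (φ k))))) atTop (𝓝 0) := by
        have := hVc.continuousAt.tendsto.comp hguL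
        rwa [hVL] at this
      simpa [hVG] using this
end
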